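/- If ops is a canonical edit script with ops(G2) = G3 and op is a single edit operation with op(G1) = G2, then there exists a canonical edit script ops' with ops'(G1) = G3 and |ops'| ≤ 1 + |ops|; moreover ops' is obtained by exhaustively applying the rewrite rules of the paper to the marked script op*; ops, and this rewriting terminates because each rule strictly decreases the length of the suffix beginning at the marked operation. -/

import Mathlib

/-!
Property graphs, homomorphisms/isomorphisms/subgraphs, edit operations,
edit scripts, canonical scripts, graph edit distance, partial isomorphisms
and their cost, and the edit-script rewriting system of the paper
"Flexible graph matching and graph edit distance using answer set programming".
-/

universe u v w z

variable {ι : Type u} {L : Type v} {K : Type w} {D : Type z}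

/-- A raw property-graph structure: finite sets of node and edge identifiers,
partial source/target/label functions (modelled via `Option`), and a partial
key-value property assignment. -/
structure PreGraph (ι : Type u) (L : Type v) (K : Type w) (D : Type z) where
  V : Finset ι
  E : Finset ι
  src : ι → Option ι
  tgt : ι → Option ι
  lab : ι → Option L
  prop : ι → K → Option D

section Graphs

variable [DecidableEq ι]

/-- The invariants making a raw structure an actual property graph:
nodes and edges are disjoint, sources and targets are defined exactly on
edges and map into the node set, labels are defined exactly on nodes and
edges, and properties are defined only on nodes and edges. -/
structure IsPGraph (G : PreGraph ι L K D) : Prop where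
  disj : Disjoint G.V G.E
  src_dom : ∀ e, (G.src e).isSome ↔ e ∈ G.E
  tgt_dom : ∀ e, (G.tgt e).isSome ↔ e ∈ G.E
  src_mem : ∀ e v, G.src e = some v → v ∈ G.V
  tgt_mem : ∀ e v, G.tgt e = some v → v ∈ G.V
  lab_dom : ∀ x, (G.lab x).isSome ↔ x ∈ G.V ∪ G.E
  prop_dom : ∀ x k, (G.prop x k).isSome → x ∈ G.V ∪ G.E

/-- A homomorphism of property graphs (represented by a total function on
identifiers): maps nodes to nodes and edges to edges preserving labels,
sources, targets, and all defined properties. -/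
structure IsHom (G1 G2 : PreGraph ι L K D) (h : ι → ι) : Prop where
  map_V : ∀ v ∈ G1.V, h v ∈ G2.V
  map_E : ∀ e ∈ G1.E, h e ∈ G2.E
  lab_eq : ∀ x ∈ G1.V ∪ G1.E, G2.lab (h x) = G1.lab x
  src_eq : ∀ e ∈ G1.E, ∀ v, G1.src e = some v → G2.src (h e) = some (h v)
  tgt_eq : ∀ e ∈ G1.E, ∀ v, G1.tgt e = some v → G2.tgt (h e) = some (h v)
  prop_eq : ∀ x ∈ G1.V ∪ G1.E, ∀ k d, G1.prop x k = some d → G2.prop (h x) k = some d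

/-- An isomorphism of property graphs: an invertible homomorphism whose
inverse is also a homomorphism. -/
def IsIso (G1 G2 : PreGraph ι L K D) (h : ι → ι) : Prop :=
  IsHom G1 G2 h ∧ ∃ g : ι → ι, IsHom G2 G1 g ∧
    (∀ x ∈ G1.V ∪ G1.E, g (h x) = x) ∧ (∀ y ∈ G2.V ∪ G2.E, h (g y) = y)

/-- `G'` is a subgraph of `G`: `G'` is itself a property graph, its nodes and
edges are among those of `G`, and sources, targets, labels and defined
properties agree with those of `G`. -/
def IsSubgraph (G' G : PreGraph ι L K D) : Prop :=
  IsPGraph G' ∧ G'.V ⊆ G.V ∧ G'.E ⊆ G.E ∧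
  (∀ e ∈ G'.E, G'.src e = G.src e ∧ G'.tgt e = G.tgt e) ∧
  (∀ x ∈ G'.V ∪ G'.E, G'.lab x = G.lab x) ∧
  (∀ x k d, G'.prop x k = some d → G.prop x k = some d)

end Graphs

/-- The seven edit operations on property graphs. -/
inductive EditOp (ι : Type u) (L : Type v) (K : Type w) (D : Type z) where
  | insV (v : ι) (l : L)
  | insE (e v w : ι) (l : L)
  | insP (x : ι) (k : K) (d : D)
  | delV (v : ι)
  | delE (e : ι)
  | delP (x : ι) (k : K)
  | updP (x : ι) (k : K) (d : D)

section Edits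

variable [DecidableEq ι] [DecidableEq K]

/-- The precondition of an edit operation on a graph. -/
def Applicable (op : EditOp ι L K D) (G : PreGraph ι L K D) : Prop :=
  match op with
  | .insV v _ => v ∉ G.V ∪ G.E
  | .insE e v w _ => v ∈ G.V ∧ w ∈ G.V ∧ e ∉ G.V ∪ G.E
  | .insP x k _ => x ∈ G.V ∪ G.E ∧ G.prop x k = none
  | .delV v => v ∈ G.V ∧ (∀ e ∈ G.E, G.src e ≠ some v ∧ G.tgt e ≠ some v) ∧
      (∀ k, G.prop v k = none)
  | .delE e => e ∈ G.E ∧ (∀ k, G.prop e k = none)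
  | .delP x k => (G.prop x k).isSome
  | .updP x k _ => (G.prop x k).isSome

/-- The effect of an edit operation on a graph. -/
def applyOp (op : EditOp ι L K D) (G : PreGraph ι L K D) : PreGraph ι L K D :=
  match op with
  | .insV v l =>
      { G with
        V := (insert v G.V)
        lab := fun x => if x = v then some l else G.lab x }
  | .insE e v w l =>
      { G with
        E := (insert e G.E)
        src := fun x => if x = e then some v else G.src x
        tgt := fun x => if x = e then some w else G.tgt x
        lab := fun x => if x = e then some l else G.lab x }
  | .insP x k d =>
      { G with prop := fun y k' => if y = x ∧ k' = k then some d else G.prop y k' }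
  | .delV v =>
      { G with
        V := (G.V.erase v)
        lab := fun x => if x = v then none else G.lab x }
  | .delE e =>
      { G with
        E := (G.E.erase e)
        src := fun x => if x = e then none else G.src x
        tgt := fun x => if x = e then none else G.tgt x
        lab := fun x => if x = e then none else G.lab x }
  | .delP x k =>
      { G with prop := fun y k' => if y = x ∧ k' = k then none else G.prop y k' }
  | .updP x k d =>
      { G with prop := fun y k' => if y = x ∧ k' = k then some d else G.prop y k' }

/-- An edit script is valid on `G` if each operation is applicable in the
graph produced by the preceding ones. -/
inductive ValidScript : PreGraph ι L K D → List (EditOp ι L K D) → Prop where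
  | nil (G : PreGraph ι L K D) : ValidScript G []
  | cons {G : PreGraph ι L K D} {op : EditOp ι L K D} {ops : List (EditOp ι L K D)} :
      Applicable op G → ValidScript (applyOp op G) ops → ValidScript G (op :: ops)

/-- The result `ops(G)` of applying an edit script in order. -/
def applyScript (ops : List (EditOp ι L K D)) (G : PreGraph ι L K D) : PreGraph ι L K D :=
  ops.foldl (fun g op => applyOp op g) G

/-- A canonical edit script: property deletions, then edge deletions, then
node deletions, then property updates, then node insertions, then edge
insertions, then property insertions. -/
def Canonical (ops : List (EditOp ι L K D)) : Prop :=
  ∃ dp de dv up iv ie ip : List (EditOp ι L K D),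
    ops = dp ++ de ++ dv ++ up ++ iv ++ ie ++ ip ∧
    (∀ op ∈ dp, ∃ x k, op = EditOp.delP x k) ∧
    (∀ op ∈ de, ∃ e, op = EditOp.delE e) ∧
    (∀ op ∈ dv, ∃ v, op = EditOp.delV v) ∧
    (∀ op ∈ up, ∃ x k d, op = EditOp.updP x k d) ∧
    (∀ op ∈ iv, ∃ v l, op = EditOp.insV v l) ∧
    (∀ op ∈ ie, ∃ e v w l, op = EditOp.insE e v w l) ∧
    (∀ op ∈ ip, ∃ x k d, op = EditOp.insP x k d)

/-- The set of lengths of valid edit scripts transforming `G1` into a graph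
isomorphic to `G2`. -/
def GEDSet (G1 G2 : PreGraph ι L K D) : Set ℕ :=
  {n | ∃ ops : List (EditOp ι L K D), ValidScript G1 ops ∧
        (∃ f : ι → ι, IsIso (applyScript ops G1) G2 f) ∧ ops.length = n}

/-- The graph edit distance: the minimum length of a valid edit script
transforming `G1` into a graph isomorphic to `G2`. -/
noncomputable def GED (G1 G2 : PreGraph ι L K D) : ℕ :=
  sInf (GEDSet G1 G2)

/-- The number of defined properties of a graph. -/
def propCount [Fintype K] (G : PreGraph ι L K D) : ℕ :=
  ∑ x ∈ G.V ∪ G.E, (Finset.univ.filter fun k : K => (G.prop x k).isSome).card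

end Edits

/-- A possibly-marked edit operation: the boolean records whether the
operation is marked (`op*`). -/
abbrev MOp (ι : Type u) (L : Type v) (K : Type w) (D : Type z) :=
  EditOp ι L K D × Bool

/-- The edit-script rewrite rules of Figure 5 of the paper, acting on the
marked operation and the operation immediately following it. -/
inductive RewStep : List (MOp ι L K D) → List (MOp ι L K D) → Prop where
  | delE_delP (e x : ι) (k : K) :
      RewStep [(.delE e, true), (.delP x k, false)] [(.delP x k, false), (.delE e, true)]
  | delV_delP (v x : ι) (k : K) :
      RewStep [(.delV v, true), (.delP x k, false)] [(.delP x k, false), (.delV v, true)]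
  | delV_delE (v e : ι) :
      RewStep [(.delV v, true), (.delE e, false)] [(.delE e, false), (.delV v, true)]
  | updP_delP_same (x : ι) (k : K) (d : D) :
      RewStep [(.updP x k d, true), (.delP x k, false)] [(.delP x k, false)]
  | updP_delP_ne (x y : ι) (k k' : K) (d : D) (h : ¬(x = y ∧ k = k')) :
      RewStep [(.updP x k d, true), (.delP y k', false)]
        [(.delP y k', false), (.updP x k d, true)]
  | updP_delE (x : ι) (k : K) (d : D) (e : ι) :
      RewStep [(.updP x k d, true), (.delE e, false)] [(.delE e, false), (.updP x k d, true)]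
  | updP_delV (x : ι) (k : K) (d : D) (v : ι) :
      RewStep [(.updP x k d, true), (.delV v, false)] [(.delV v, false), (.updP x k d, true)]
  | insV_delP (v : ι) (l : L) (x : ι) (k : K) :
      RewStep [(.insV v l, true), (.delP x k, false)] [(.delP x k, false), (.insV v l, true)]
  | insV_delE (v : ι) (l : L) (e : ι) :
      RewStep [(.insV v l, true), (.delE e, false)] [(.delE e, false), (.insV v l, true)]
  | insV_delV_same (v : ι) (l : L) :
      RewStep [(.insV v l, true), (.delV v, false)] []
  | insV_delV_ne (v : ι) (l : L) (v' : ι) (h : v ≠ v') :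
      RewStep [(.insV v l, true), (.delV v', false)] [(.delV v', false), (.insV v l, true)]
  | insV_updP (v : ι) (l : L) (x : ι) (k : K) (d : D) :
      RewStep [(.insV v l, true), (.updP x k d, false)]
        [(.updP x k d, false), (.insV v l, true)]
  | insE_delP (e v w : ι) (l : L) (x : ι) (k : K) :
      RewStep [(.insE e v w l, true), (.delP x k, false)]
        [(.delP x k, false), (.insE e v w l, true)]
  | insE_delE_same (e v w : ι) (l : L) :
      RewStep [(.insE e v w l, true), (.delE e, false)] []
  | insE_delE_ne (e v w : ι) (l : L) (e' : ι) (h : e ≠ e') :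
      RewStep [(.insE e v w l, true), (.delE e', false)]
        [(.delE e', false), (.insE e v w l, true)]
  | insE_delV (e v w : ι) (l : L) (v' : ι) :
      RewStep [(.insE e v w l, true), (.delV v', false)]
        [(.delV v', false), (.insE e v w l, true)]
  | insE_updP (e v w : ι) (l : L) (x : ι) (k : K) (d : D) :
      RewStep [(.insE e v w l, true), (.updP x k d, false)]
        [(.updP x k d, false), (.insE e v w l, true)]
  | insE_insV (e v w : ι) (l : L) (v' : ι) (l' : L) :
      RewStep [(.insE e v w l, true), (.insV v' l', false)]
        [(.insV v' l', false), (.insE e v w l, true)]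
  | insP_delP_same (x : ι) (k : K) (d : D) :
      RewStep [(.insP x k d, true), (.delP x k, false)] []
  | insP_delP_ne (x y : ι) (k k' : K) (d : D) (h : ¬(x = y ∧ k = k')) :
      RewStep [(.insP x k d, true), (.delP y k', false)]
        [(.delP y k', false), (.insP x k d, true)]
  | insP_delE (x : ι) (k : K) (d : D) (e : ι) :
      RewStep [(.insP x k d, true), (.delE e, false)] [(.delE e, false), (.insP x k d, true)]
  | insP_delV (x : ι) (k : K) (d : D) (v : ι) :
      RewStep [(.insP x k d, true), (.delV v, false)] [(.delV v, false), (.insP x k d, true)]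
  | insP_updP_same (x : ι) (k : K) (d d' : D) :
      RewStep [(.insP x k d, true), (.updP x k d', false)] [(.insP x k d', true)]
  | insP_updP_ne (x y : ι) (k k' : K) (d d' : D) (h : ¬(x = y ∧ k = k')) :
      RewStep [(.insP x k d, true), (.updP y k' d', false)]
        [(.updP y k' d', false), (.insP x k d, true)]
  | insP_insV (x : ι) (k : K) (d : D) (v : ι) (l : L) :
      RewStep [(.insP x k d, true), (.insV v l, false)] [(.insV v l, false), (.insP x k d, true)]
  | insP_insE (x : ι) (k : K) (d : D) (e v w : ι) (l : L) :
      RewStep [(.insP x k d, true), (.insE e v w l, false)]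
        [(.insE e v w l, false), (.insP x k d, true)]
  | unmark (op : EditOp ι L K D) :
      RewStep [(op, true)] [(op, false)]

/-- One rewrite step on a marked edit script: apply one of the rules at the
position of the marked operation (everything before it is unmarked). -/
def Rew (m m' : List (MOp ι L K D)) : Prop :=
  ∃ pre a b post : List (MOp ι L K D),
    (∀ p ∈ pre, p.2 = false) ∧ RewStep a b ∧ m = pre ++ a ++ post ∧ m' = pre ++ b ++ post

/-- The `*`-length of a marked script: the length of the suffix beginning at
the (first) marked operation, or `0` if there is none. -/
def starLen : List (MOp ι L K D) → ℕ
  | [] => 0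
  | (_, b) :: rest => if b then rest.length + 1 else starLen rest

section PartialIso

variable [DecidableEq ι]

/-- A partial isomorphism between two property graphs, represented as a
partial map on identifiers: injective, matching nodes to nodes and edges to
edges with equal labels, and matching the endpoints of matched edges. -/
def IsPartialIso (G1 G2 : PreGraph ι L K D) (h : ι → Option ι) : Prop :=
  (∀ x y, h x = some y → (x ∈ G1.V ∧ y ∈ G2.V) ∨ (x ∈ G1.E ∧ y ∈ G2.E)) ∧
  (∀ x x' y, h x = some y → h x' = some y → x = x') ∧
  (∀ x y, h x = some y → G2.lab y = G1.lab x) ∧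
  (∀ e e' v, h e = some e' → G1.src e = some v → h v = G2.src e') ∧
  (∀ e e' v, h e = some e' → G1.tgt e = some v → h v = G2.tgt e')

/-- The nodes and edges of `G1` left unmatched by `h`. -/
def unmatchedL (G1 : PreGraph ι L K D) (h : ι → Option ι) : Finset ι :=
  (G1.V ∪ G1.E).filter fun x => h x = none

/-- The nodes and edges of `G2` left unmatched by `h`. -/
def unmatchedR (G1 G2 : PreGraph ι L K D) (h : ι → Option ι) : Finset ι :=
  (G2.V ∪ G2.E).filter fun y => ∀ x ∈ G1.V ∪ G1.E, h x ≠ some y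

/-- The number of defined properties on a given object of a graph. -/
def propsOn [Fintype K] (G : PreGraph ι L K D) (x : ι) : ℕ :=
  (Finset.univ.filter fun k : K => (G.prop x k).isSome).card

/-- The number of keys at which the properties of a matched pair disagree
(defined with different values, or defined on only one side). -/
def mismatchCount [Fintype K] [DecidableEq D] (G1 G2 : PreGraph ι L K D) (x y : ι) : ℕ :=
  (Finset.univ.filter fun k : K => G1.prop x k ≠ G2.prop y k).card

/-- The cost of a partial isomorphism: unmatched nodes and edges on both
sides, mismatched properties of matched pairs, and all properties on
unmatched objects of both sides. -/
def pisoCost [Fintype K] [DecidableEq D] (G1 G2 : PreGraph ι L K D) (h : ι → Option ι) : ℕ :=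
  (unmatchedL G1 h).card + (unmatchedR G1 G2 h).card +
  (∑ x ∈ G1.V ∪ G1.E, (h x).elim 0 fun y => mismatchCount G1 G2 x y) +
  (∑ x ∈ unmatchedL G1 h, propsOn G1 x) +
  (∑ y ∈ unmatchedR G1 G2 h, propsOn G2 y)

end PartialIso

/-! ### Auxiliary machinery -/

namespace GEDAux

/-- Canonical rank of an edit operation. -/
def rnk : EditOp ι L K D → ℕ
  | .delP _ _ => 0
  | .delE _ => 1
  | .delV _ => 2
  | .updP _ _ _ => 3
  | .insV _ _ => 4
  | .insE _ _ _ _ => 5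
  | .insP _ _ _ => 6

theorem PreGraph.ext' {G H : PreGraph ι L K D} (hV : G.V = H.V) (hE : G.E = H.E)
    (hs : G.src = H.src) (ht : G.tgt = H.tgt) (hl : G.lab = H.lab) (hp : G.prop = H.prop) :
    G = H := by cases G; cases H; simp_all

theorem starLen_le (l : List (MOp ι L K D)) : starLen l ≤ l.length := by
  induction l with
  | nil => simp [starLen]
  | cons a t ih => obtain ⟨o, b⟩ := a; by_cases hb : b <;> simp [starLen, hb] <;> omega

theorem starLen_append_false {pre l : List (MOp ι L K D)} (h : ∀ p ∈ pre, p.2 = false) :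
    starLen (pre ++ l) = starLen l := by
  induction pre with
  | nil => rfl
  | cons a t ih =>
    obtain ⟨o, b⟩ := a
    have hb : b = false := h (o, b) (by simp)
    subst hb
    simpa [starLen] using ih (fun p hp => h p (by simp [hp]))

theorem rew_starLen {m m' : List (MOp ι L K D)} (h : Rew m m') : starLen m' < starLen m := by
  obtain ⟨pre, a, b, post, hpre, hstep, rfl, rfl⟩ := h
  rw [List.append_assoc, List.append_assoc, starLen_append_false hpre,
    starLen_append_false hpre]
  have hle := starLen_le post
  cases hstep <;> simp [starLen] <;> omega

theorem rew_cons {m m' : List (MOp ι L K D)} (q : EditOp ι L K D) (h : Rew m m') :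
    Rew ((q, false) :: m) ((q, false) :: m') := by
  obtain ⟨pre, a, b, post, h1, h2, h3, h4⟩ := h
  refine ⟨(q, false) :: pre, a, b, post, ?_, h2, by simp [h3], by simp [h4]⟩
  rintro p hp
  rcases List.mem_cons.mp hp with rfl | hp
  exacts [rfl, h1 p hp]

theorem rtg_cons {m m' : List (MOp ι L K D)} (q : EditOp ι L K D)
    (h : Relation.ReflTransGen Rew m m') :
    Relation.ReflTransGen Rew ((q, false) :: m) ((q, false) :: m') :=
  Relation.ReflTransGen.lift (fun x => (q, false) :: x) (fun _ _ hr => rew_cons q hr) _ _ h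

theorem rew_head {a b : List (MOp ι L K D)} (h : RewStep a b) (post : List (MOp ι L K D)) :
    Rew (a ++ post) (b ++ post) :=
  ⟨[], a, b, post, by simp, h, rfl, rfl⟩

/-- Sortedness by rank. -/
def Srt (ops : List (EditOp ι L K D)) : Prop :=
  List.Pairwise (fun a b => rnk a ≤ rnk b) ops

theorem srt_append {l1 l2 : List (EditOp ι L K D)} (c : ℕ) (h1 : Srt l1) (h2 : Srt l2)
    (b1 : ∀ a ∈ l1, rnk a ≤ c) (b2 : ∀ b ∈ l2, c ≤ rnk b) : Srt (l1 ++ l2) :=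
  List.pairwise_append.mpr ⟨h1, h2, fun a ha b hb => (b1 a ha).trans (b2 b hb)⟩

theorem srt_const {l : List (EditOp ι L K D)} (c : ℕ) (h : ∀ a ∈ l, rnk a = c) : Srt l := by
  induction l with
  | nil => exact List.Pairwise.nil
  | cons a t ih =>
    refine List.Pairwise.cons (fun b hb => ?_) (ih fun b hb => h b (by simp [hb]))
    rw [h a (by simp), h b (by simp [hb])]

theorem canonical_srt {ops : List (EditOp ι L K D)} (h : Canonical ops) : Srt ops := by
  obtain ⟨dp, de, dv, up, iv, ie, ip, rfl, hdp, hde, hdv, hup, hiv, hie, hip⟩ := h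
  have cdp : ∀ a ∈ dp, rnk a = 0 := by rintro a ha; obtain ⟨x, k, rfl⟩ := hdp a ha; rfl
  have cde : ∀ a ∈ de, rnk a = 1 := by rintro a ha; obtain ⟨e, rfl⟩ := hde a ha; rfl
  have cdv : ∀ a ∈ dv, rnk a = 2 := by rintro a ha; obtain ⟨v, rfl⟩ := hdv a ha; rfl
  have cup : ∀ a ∈ up, rnk a = 3 := by rintro a ha; obtain ⟨x, k, d, rfl⟩ := hup a ha; rfl
  have civ : ∀ a ∈ iv, rnk a = 4 := by rintro a ha; obtain ⟨v, l, rfl⟩ := hiv a ha; rfl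
  have cie : ∀ a ∈ ie, rnk a = 5 := by
    rintro a ha; obtain ⟨e, v, w, l, rfl⟩ := hie a ha; rfl
  have cip : ∀ a ∈ ip, rnk a = 6 := by rintro a ha; obtain ⟨x, k, d, rfl⟩ := hip a ha; rfl
  have s7 : Srt (ie ++ ip) := srt_append 5 (srt_const 5 cie) (srt_const 6 cip)
    (fun a ha => (cie a ha).le) (fun a ha => by rw [cip a ha]; omega)
  have s6 : Srt (iv ++ (ie ++ ip)) := srt_append 4 (srt_const 4 civ) s7
    (fun a ha => (civ a ha).le)
    (fun a ha => by rcases List.mem_append.mp ha with h' | h'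
                    · rw [cie a h']; omega
                    · rw [cip a h']; omega)
  have s5 : Srt (up ++ (iv ++ (ie ++ ip))) := srt_append 3 (srt_const 3 cup) s6
    (fun a ha => (cup a ha).le)
    (fun a ha => by rcases List.mem_append.mp ha with h' | h'
                    · rw [civ a h']; omega
                    · rcases List.mem_append.mp h' with h'' | h''
                      · rw [cie a h'']; omega
                      · rw [cip a h'']; omega)
  have bnd5 : ∀ a ∈ up ++ (iv ++ (ie ++ ip)), 3 ≤ rnk a := by
    intro a ha
    rcases List.mem_append.mp ha with h' | h'
    · rw [cup a h']
    · rcases List.mem_append.mp h' with h'' | h''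
      · rw [civ a h'']; omega
      · rcases List.mem_append.mp h'' with h3 | h3
        · rw [cie a h3]; omega
        · rw [cip a h3]; omega
  have s4 : Srt (dv ++ (up ++ (iv ++ (ie ++ ip)))) := srt_append 3 (srt_const 2 cdv) s5
    (fun a ha => by rw [cdv a ha]; omega) bnd5
  have bnd4 : ∀ a ∈ dv ++ (up ++ (iv ++ (ie ++ ip))), 2 ≤ rnk a := by
    intro a ha
    rcases List.mem_append.mp ha with h' | h'
    · rw [cdv a h']
    · exact le_trans (by omega) (bnd5 a h')
  have s3 : Srt (de ++ (dv ++ (up ++ (iv ++ (ie ++ ip))))) := srt_append 2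
    (srt_const 1 cde) s4 (fun a ha => by rw [cde a ha]; omega) bnd4
  have bnd3 : ∀ a ∈ de ++ (dv ++ (up ++ (iv ++ (ie ++ ip)))), 1 ≤ rnk a := by
    intro a ha
    rcases List.mem_append.mp ha with h' | h'
    · rw [cde a h']
    · exact le_trans (by omega) (bnd4 a h')
  have s2 : Srt (dp ++ (de ++ (dv ++ (up ++ (iv ++ (ie ++ ip)))))) := srt_append 1
    (srt_const 0 cdp) s3 (fun a ha => by rw [cdp a ha]; omega) bnd3
  simpa [Srt, List.append_assoc] using s2

theorem block_nil {o : EditOp ι L K D} {rest l : List (EditOp ι L K D)}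
    (hbnd : ∀ b ∈ rest, rnk o ≤ rnk b) (hsub : ∀ a ∈ l, a ∈ rest) {c : ℕ}
    (hc : ∀ a ∈ l, rnk a = c) (hlt : c < rnk o) : l = [] := by
  cases l with
  | nil => rfl
  | cons a t =>
    exact absurd (hbnd a (hsub a (by simp))) (by rw [hc a (by simp)]; omega)

theorem srt_canonical {ops : List (EditOp ι L K D)} (h : Srt ops) : Canonical ops := by
  induction ops with
  | nil => exact ⟨[], [], [], [], [], [], [], by simp, by simp, by simp, by simp, by simp,
      by simp, by simp, by simp⟩
  | cons o rest ih =>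
    have hbnd : ∀ b ∈ rest, rnk o ≤ rnk b := (List.pairwise_cons.mp h).1
    obtain ⟨dp, de, dv, up, iv, ie, ip, heq, hdp, hde, hdv, hup, hiv, hie, hip⟩ :=
      ih (List.pairwise_cons.mp h).2
    have cdp : ∀ a ∈ dp, rnk a = 0 := by rintro a ha; obtain ⟨x, k, rfl⟩ := hdp a ha; rfl
    have cde : ∀ a ∈ de, rnk a = 1 := by rintro a ha; obtain ⟨e, rfl⟩ := hde a ha; rfl
    have cdv : ∀ a ∈ dv, rnk a = 2 := by rintro a ha; obtain ⟨v, rfl⟩ := hdv a ha; rfl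
    have cup : ∀ a ∈ up, rnk a = 3 := by rintro a ha; obtain ⟨x, k, d, rfl⟩ := hup a ha; rfl
    have civ : ∀ a ∈ iv, rnk a = 4 := by rintro a ha; obtain ⟨v, l, rfl⟩ := hiv a ha; rfl
    have cie : ∀ a ∈ ie, rnk a = 5 := by
      rintro a ha; obtain ⟨e, v, w, l, rfl⟩ := hie a ha; rfl
    have sdp : ∀ a ∈ dp, a ∈ rest := by intro a ha; rw [heq]; simp [ha]
    have sde : ∀ a ∈ de, a ∈ rest := by intro a ha; rw [heq]; simp [ha]
    have sdv : ∀ a ∈ dv, a ∈ rest := by intro a ha; rw [heq]; simp [ha]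
    have sup : ∀ a ∈ up, a ∈ rest := by intro a ha; rw [heq]; simp [ha]
    have siv : ∀ a ∈ iv, a ∈ rest := by intro a ha; rw [heq]; simp [ha]
    have sie : ∀ a ∈ ie, a ∈ rest := by intro a ha; rw [heq]; simp [ha]
    cases o with
    | delP x k =>
      refine ⟨.delP x k :: dp, de, dv, up, iv, ie, ip, by simp [heq], ?_, hde, hdv, hup,
        hiv, hie, hip⟩
      rintro a ha
      rcases List.mem_cons.mp ha with rfl | ha
      exacts [⟨x, k, rfl⟩, hdp a ha]
    | delE e =>
      have n1 : dp = [] := block_nil hbnd sdp cdp (by simp [rnk])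
      refine ⟨[], .delE e :: de, dv, up, iv, ie, ip, by simp [heq, n1], by simp, ?_, hdv,
        hup, hiv, hie, hip⟩
      rintro a ha
      rcases List.mem_cons.mp ha with rfl | ha
      exacts [⟨e, rfl⟩, hde a ha]
    | delV v =>
      have n1 : dp = [] := block_nil hbnd sdp cdp (by simp [rnk])
      have n2 : de = [] := block_nil hbnd sde cde (by simp [rnk])
      refine ⟨[], [], .delV v :: dv, up, iv, ie, ip, by simp [heq, n1, n2], by simp, by simp,
        ?_, hup, hiv, hie, hip⟩
      rintro a ha
      rcases List.mem_cons.mp ha with rfl | ha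
      exacts [⟨v, rfl⟩, hdv a ha]
    | updP x k d =>
      have n1 : dp = [] := block_nil hbnd sdp cdp (by simp [rnk])
      have n2 : de = [] := block_nil hbnd sde cde (by simp [rnk])
      have n3 : dv = [] := block_nil hbnd sdv cdv (by simp [rnk])
      refine ⟨[], [], [], .updP x k d :: up, iv, ie, ip, by simp [heq, n1, n2, n3], by simp,
        by simp, by simp, ?_, hiv, hie, hip⟩
      rintro a ha
      rcases List.mem_cons.mp ha with rfl | ha
      exacts [⟨x, k, d, rfl⟩, hup a ha]
    | insV v l =>
      have n1 : dp = [] := block_nil hbnd sdp cdp (by simp [rnk])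
      have n2 : de = [] := block_nil hbnd sde cde (by simp [rnk])
      have n3 : dv = [] := block_nil hbnd sdv cdv (by simp [rnk])
      have n4 : up = [] := block_nil hbnd sup cup (by simp [rnk])
      refine ⟨[], [], [], [], .insV v l :: iv, ie, ip, by simp [heq, n1, n2, n3, n4],
        by simp, by simp, by simp, by simp, ?_, hie, hip⟩
      rintro a ha
      rcases List.mem_cons.mp ha with rfl | ha
      exacts [⟨v, l, rfl⟩, hiv a ha]
    | insE e v w l =>
      have n1 : dp = [] := block_nil hbnd sdp cdp (by simp [rnk])
      have n2 : de = [] := block_nil hbnd sde cde (by simp [rnk])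
      have n3 : dv = [] := block_nil hbnd sdv cdv (by simp [rnk])
      have n4 : up = [] := block_nil hbnd sup cup (by simp [rnk])
      have n5 : iv = [] := block_nil hbnd siv civ (by simp [rnk])
      refine ⟨[], [], [], [], [], .insE e v w l :: ie, ip,
        by simp [heq, n1, n2, n3, n4, n5], by simp, by simp, by simp, by simp, by simp,
        ?_, hip⟩
      rintro a ha
      rcases List.mem_cons.mp ha with rfl | ha
      exacts [⟨e, v, w, l, rfl⟩, hie a ha]
    | insP x k d =>
      have n1 : dp = [] := block_nil hbnd sdp cdp (by simp [rnk])
      have n2 : de = [] := block_nil hbnd sde cde (by simp [rnk])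
      have n3 : dv = [] := block_nil hbnd sdv cdv (by simp [rnk])
      have n4 : up = [] := block_nil hbnd sup cup (by simp [rnk])
      have n5 : iv = [] := block_nil hbnd siv civ (by simp [rnk])
      have n6 : ie = [] := block_nil hbnd sie cie (by simp [rnk])
      refine ⟨[], [], [], [], [], [], .insP x k d :: ip,
        by simp [heq, n1, n2, n3, n4, n5, n6], by simp, by simp, by simp, by simp, by simp,
        by simp, ?_⟩
      rintro a ha
      rcases List.mem_cons.mp ha with rfl | ha
      exacts [⟨x, k, d, rfl⟩, hip a ha]

/-- The "interacting" pairs: marked op then unmarked q for which a special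
(cancellation/absorption) rule applies. -/
def clash : EditOp ι L K D → EditOp ι L K D → Prop
  | .updP x k _, .delP y k' => x = y ∧ k = k'
  | .insV v _, .delV v' => v = v'
  | .insE e _ _ _, .delE e' => e = e'
  | .insP x k _, .delP y k' => x = y ∧ k = k'
  | .insP x k _, .updP y k' _ => x = y ∧ k = k'
  | _, _ => False

theorem rewstep_swap {op q : EditOp ι L K D} (hlt : rnk q < rnk op) (hnc : ¬ clash op q) :
    RewStep [(op, true), (q, false)] [(q, false), (op, true)] := by
  cases op <;> cases q <;>
    first
      | (exfalso; simp only [rnk] at hlt; omega)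
      | exact .delE_delP ..
      | exact .delV_delP ..
      | exact .delV_delE ..
      | exact .updP_delP_ne _ _ _ _ _ hnc
      | exact .updP_delE ..
      | exact .updP_delV ..
      | exact .insV_delP ..
      | exact .insV_delE ..
      | exact .insV_delV_ne _ _ _ hnc
      | exact .insV_updP ..
      | exact .insE_delP ..
      | exact .insE_delE_ne _ _ _ _ _ hnc
      | exact .insE_delV ..
      | exact .insE_updP ..
      | exact .insE_insV ..
      | exact .insP_delP_ne _ _ _ _ _ hnc
      | exact .insP_delE ..
      | exact .insP_delV ..
      | exact .insP_updP_ne _ _ _ _ _ _ hnc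
      | exact .insP_insV ..
      | exact .insP_insE ..

section Sem

variable [DecidableEq ι] [DecidableEq K]

theorem isPGraph_applyOp {G : PreGraph ι L K D} {op : EditOp ι L K D}
    (hG : IsPGraph G) (h : Applicable op G) : IsPGraph (applyOp op G) := by
  obtain ⟨disj, sdom, tdom, smem, tmem, ldom, pdom⟩ := hG
  cases op with
  | insV v l =>
    simp only [Applicable, Finset.mem_union, not_or] at h
    refine ⟨?_, sdom, tdom, fun e u hh => Finset.mem_insert_of_mem (smem e u hh),
      fun e u hh => Finset.mem_insert_of_mem (tmem e u hh), ?_, ?_⟩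
    · simp only [applyOp, Finset.disjoint_left, Finset.mem_insert]
      rintro a (rfl | ha) hae
      · exact h.2 hae
      · exact Finset.disjoint_left.mp disj ha hae
    · intro x
      simp only [applyOp, Finset.mem_union, Finset.mem_insert]
      by_cases hx : x = v
      · simp [hx]
      · simpa [hx, Finset.mem_union] using ldom x
    · intro x k
      simp only [applyOp, Finset.mem_union, Finset.mem_insert]
      intro hk
      rcases Finset.mem_union.mp (pdom x k hk) with h' | h'
      exacts [Or.inl (Or.inr h'), Or.inr h']
  | insE e v w l =>
    obtain ⟨hv, hw, he⟩ := h
    simp only [Finset.mem_union, not_or] at he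
    refine ⟨?_, ?_, ?_, ?_, ?_, ?_, ?_⟩
    · simp only [applyOp, Finset.disjoint_left, Finset.mem_insert]
      intro a ha hae
      rcases hae with rfl | hae
      · exact he.1 ha
      · exact Finset.disjoint_left.mp disj ha hae
    · intro f
      by_cases hf : f = e <;> simp [applyOp, hf, sdom f]
    · intro f
      by_cases hf : f = e <;> simp [applyOp, hf, tdom f]
    · intro f u hfu
      simp only [applyOp] at hfu
      by_cases hf : f = e
      · simp only [hf, if_pos rfl] at hfu
        exact (Option.some_inj.mp hfu) ▸ hv
      · rw [if_neg hf] at hfu; exact smem f u hfu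
    · intro f u hfu
      simp only [applyOp] at hfu
      by_cases hf : f = e
      · simp only [hf, if_pos rfl] at hfu
        exact (Option.some_inj.mp hfu) ▸ hw
      · rw [if_neg hf] at hfu; exact tmem f u hfu
    · intro x
      by_cases hx : x = e
      · simp [applyOp, hx]
      · simpa [applyOp, hx, Finset.mem_union] using ldom x
    · intro x k hk
      simp only [applyOp] at hk ⊢
      rcases Finset.mem_union.mp (pdom x k hk) with h' | h'
      · exact Finset.mem_union.mpr (Or.inl h')
      · exact Finset.mem_union.mpr (Or.inr (Finset.mem_insert.mpr (Or.inr h')))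
  | insP x k d =>
    obtain ⟨hx, -⟩ := h
    refine ⟨disj, sdom, tdom, smem, tmem, ldom, ?_⟩
    intro y k' hk'
    simp only [applyOp] at hk' ⊢
    by_cases hc : y = x ∧ k' = k
    · exact hc.1 ▸ hx
    · rw [if_neg hc] at hk'; exact pdom y k' hk'
  | delV v =>
    obtain ⟨hv, hedge, hprop⟩ := h
    refine ⟨?_, sdom, tdom, ?_, ?_, ?_, ?_⟩
    · exact Finset.disjoint_of_subset_left (Finset.erase_subset _ _) disj
    · intro f u hfu
      simp only [applyOp, Finset.mem_erase]
      refine ⟨?_, smem f u hfu⟩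
      rintro rfl
      have hfu' : G.src f = some u := hfu
      have hf : f ∈ G.E := (sdom f).mp (by simp [hfu'])
      exact (hedge f hf).1 hfu'
    · intro f u hfu
      simp only [applyOp, Finset.mem_erase]
      refine ⟨?_, tmem f u hfu⟩
      rintro rfl
      have hfu' : G.tgt f = some u := hfu
      have hf : f ∈ G.E := (tdom f).mp (by simp [hfu'])
      exact (hedge f hf).2 hfu'
    · intro x
      simp only [applyOp, Finset.mem_union, Finset.mem_erase]
      by_cases hx : x = v
      · subst hx
        have hnE : x ∉ G.E := Finset.disjoint_left.mp disj hv
        simp [hnE]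
      · simpa [hx, Finset.mem_union] using ldom x
    · intro x k hk
      simp only [applyOp, Finset.mem_union, Finset.mem_erase] at hk ⊢
      have hx : x ≠ v := by rintro rfl; rw [hprop k] at hk; simp at hk
      rcases Finset.mem_union.mp (pdom x k hk) with h' | h'
      exacts [Or.inl ⟨hx, h'⟩, Or.inr h']
  | delE e =>
    obtain ⟨he, hprop⟩ := h
    refine ⟨?_, ?_, ?_, ?_, ?_, ?_, ?_⟩
    · exact Finset.disjoint_of_subset_right (Finset.erase_subset _ _) disj
    · intro f
      by_cases hf : f = e <;> simp [applyOp, hf, sdom f]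
    · intro f
      by_cases hf : f = e <;> simp [applyOp, hf, tdom f]
    · intro f u hfu
      simp only [applyOp] at hfu
      by_cases hf : f = e
      · rw [if_pos hf] at hfu; exact absurd hfu (by simp)
      · rw [if_neg hf] at hfu; exact smem f u hfu
    · intro f u hfu
      simp only [applyOp] at hfu
      by_cases hf : f = e
      · rw [if_pos hf] at hfu; exact absurd hfu (by simp)
      · rw [if_neg hf] at hfu; exact tmem f u hfu
    · intro x
      simp only [applyOp, Finset.mem_union, Finset.mem_erase]
      by_cases hx : x = e
      · subst hx
        have hnV : x ∉ G.V := Finset.disjoint_right.mp disj he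
        simp [hnV]
      · simpa [hx, Finset.mem_union] using ldom x
    · intro x k hk
      simp only [applyOp, Finset.mem_union, Finset.mem_erase] at hk ⊢
      have hx : x ≠ e := by rintro rfl; rw [hprop k] at hk; simp at hk
      rcases Finset.mem_union.mp (pdom x k hk) with h' | h'
      exacts [Or.inl h', Or.inr ⟨hx, h'⟩]
  | delP x k =>
    refine ⟨disj, sdom, tdom, smem, tmem, ldom, ?_⟩
    intro y k' hk'
    simp only [applyOp] at hk'
    by_cases hc : y = x ∧ k' = k
    · rw [if_pos hc] at hk'; simp at hk'
    · rw [if_neg hc] at hk'; exact pdom y k' hk'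
  | updP x k d =>
    refine ⟨disj, sdom, tdom, smem, tmem, ldom, ?_⟩
    intro y k' hk'
    simp only [applyOp] at hk'
    by_cases hc : y = x ∧ k' = k
    · exact hc.1 ▸ Finset.mem_union.mp (pdom x k h) |>.elim
        (fun h' => Finset.mem_union.mpr (Or.inl h'))
        (fun h' => Finset.mem_union.mpr (Or.inr h'))
    · rw [if_neg hc] at hk'; exact pdom y k' hk'

theorem swap_ops {op q : EditOp ι L K D} {G : PreGraph ι L K D}
    (hG : IsPGraph G) (hlt : rnk q < rnk op) (hnc : ¬ clash op q)
    (h1 : Applicable op G) (h2 : Applicable q (applyOp op G)) :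
    Applicable q G ∧ Applicable op (applyOp q G) ∧
      applyOp op (applyOp q G) = applyOp q (applyOp op G) := by
  cases op with
  | delP x k => exfalso; simp only [rnk] at hlt; omega
  | delE e =>
    cases q with
    | delP y k' =>
      obtain ⟨heE, hpe⟩ := h1
      refine ⟨h2, ⟨heE, fun k'' => ?_⟩, rfl⟩
      show (if e = y ∧ k'' = k' then none else G.prop e k'') = none
      split_ifs with hc
      · rfl
      · exact hpe k''
    | _ => exfalso; simp only [rnk] at hlt; omega
  | delV v =>
    cases q with
    | delP y k' =>
      obtain ⟨hv, hedge, hpv⟩ := h1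
      refine ⟨h2, ⟨hv, hedge, fun k'' => ?_⟩, rfl⟩
      show (if v = y ∧ k'' = k' then none else G.prop v k'') = none
      split_ifs with hc
      · rfl
      · exact hpv k''
    | delE e' =>
      obtain ⟨hv, hedge, hpv⟩ := h1
      obtain ⟨he', hpe'⟩ := h2
      have he'' : e' ∈ G.E := he'
      refine ⟨⟨he'', fun k'' => hpe' k''⟩, ⟨hv, fun f hf => ?_, fun k'' => hpv k''⟩, ?_⟩
      · have hfE : f ∈ G.E := Finset.mem_of_mem_erase hf
        have hfe : f ≠ e' := (Finset.mem_erase.mp hf).1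
        have := hedge f hfE
        constructor
        · show (if f = e' then none else G.src f) ≠ some v
          rw [if_neg hfe]; exact this.1
        · show (if f = e' then none else G.tgt f) ≠ some v
          rw [if_neg hfe]; exact this.2
      · refine PreGraph.ext' rfl rfl rfl rfl ?_ rfl
        funext x
        show (if x = v then none else if x = e' then none else G.lab x) =
          (if x = e' then none else if x = v then none else G.lab x)
        by_cases hxa : x = v <;> by_cases hxb : x = e' <;> simp [hxa, hxb]
    | _ => exfalso; simp only [rnk] at hlt; omega
  | updP x k d =>
    cases q with
    | delP y k' =>
      have hne : ¬(x = y ∧ k = k') := hnc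
      have hne' : ¬(y = x ∧ k' = k) := fun ⟨a, b⟩ => hne ⟨a.symm, b.symm⟩
      have h2' : (if y = x ∧ k' = k then some d else G.prop y k').isSome := h2
      rw [if_neg hne'] at h2'
      refine ⟨h2', ?_, ?_⟩
      · show (if x = y ∧ k = k' then none else G.prop x k).isSome
        rw [if_neg hne]; exact h1
      · refine PreGraph.ext' rfl rfl rfl rfl rfl ?_
        funext z k''
        show (if z = x ∧ k'' = k then some d else if z = y ∧ k'' = k' then none
            else G.prop z k'') =
          (if z = y ∧ k'' = k' then none else if z = x ∧ k'' = k then some d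
            else G.prop z k'')
        by_cases c2 : z = y ∧ k'' = k'
        · have c1 : ¬(z = x ∧ k'' = k) :=
            fun c1 => hne ⟨c1.1.symm.trans c2.1, c1.2.symm.trans c2.2⟩
          rw [if_neg c1, if_pos c2, if_pos c2]
        · rw [if_neg c2, if_neg c2]
    | delE e =>
      obtain ⟨heE, hpe⟩ := h2
      have heE' : e ∈ G.E := heE
      refine ⟨⟨heE', fun k'' => ?_⟩, h1, rfl⟩
      have hp : (if e = x ∧ k'' = k then some d else G.prop e k'') = none := hpe k''
      split_ifs at hp with hc
      exact hp
    | delV v =>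
      obtain ⟨hv, hedge, hpv⟩ := h2
      have hv' : v ∈ G.V := hv
      refine ⟨⟨hv', fun f hf => hedge f hf, fun k'' => ?_⟩, h1, rfl⟩
      have hp : (if v = x ∧ k'' = k then some d else G.prop v k'') = none := hpv k''
      split_ifs at hp with hc
      exact hp
    | _ => exfalso; simp only [rnk] at hlt; omega
  | insV v l =>
    cases q with
    | delP y k' => exact ⟨h2, h1, rfl⟩
    | delE e' =>
      obtain ⟨he', hpe'⟩ := h2
      have he'' : e' ∈ G.E := he'
      have hvE : v ∉ G.V ∪ G.E := h1
      have hvne : v ≠ e' := by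
        rintro rfl; exact hvE (Finset.mem_union_right _ he'')
      refine ⟨⟨he'', fun k'' => hpe' k''⟩, ?_, ?_⟩
      · show v ∉ G.V ∪ G.E.erase e'
        intro hmem
        rcases Finset.mem_union.mp hmem with h' | h'
        · exact hvE (Finset.mem_union_left _ h')
        · exact hvE (Finset.mem_union_right _ (Finset.mem_of_mem_erase h'))
      · refine PreGraph.ext' rfl rfl rfl rfl ?_ rfl
        funext x
        show (if x = v then some l else if x = e' then none else G.lab x) =
          (if x = e' then none else if x = v then some l else G.lab x)
        by_cases hxa : x = v <;> by_cases hxb : x = e' <;> simp_all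
    | delV v' =>
      have hne : v ≠ v' := hnc
      obtain ⟨hv', hedge, hpv'⟩ := h2
      have hv'' : v' ∈ G.V := by
        have : v' ∈ insert v G.V := hv'
        rcases Finset.mem_insert.mp this with rfl | h'
        · exact absurd rfl hne.symm
        · exact h'
      have hvE : v ∉ G.V ∪ G.E := h1
      refine ⟨⟨hv'', fun f hf => hedge f hf, fun k'' => hpv' k''⟩, ?_, ?_⟩
      · show v ∉ G.V.erase v' ∪ G.E
        intro hmem
        rcases Finset.mem_union.mp hmem with h' | h'
        · exact hvE (Finset.mem_union_left _ (Finset.mem_of_mem_erase h'))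
        · exact hvE (Finset.mem_union_right _ h')
      · refine PreGraph.ext' ?_ rfl rfl rfl ?_ rfl
        · show insert v (G.V.erase v') = (insert v G.V).erase v'
          ext a
          simp only [Finset.mem_insert, Finset.mem_erase]
          constructor
          · rintro (rfl | ⟨ha, hb⟩)
            · exact ⟨hne, Or.inl rfl⟩
            · exact ⟨ha, Or.inr hb⟩
          · rintro ⟨ha, rfl | hb⟩
            · exact Or.inl rfl
            · exact Or.inr ⟨ha, hb⟩
        · funext x
          show (if x = v then some l else if x = v' then none else G.lab x) =
            (if x = v' then none else if x = v then some l else G.lab x)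
          by_cases hxa : x = v <;> by_cases hxb : x = v' <;> simp_all
    | updP y k' d' => exact ⟨h2, h1, rfl⟩
    | _ => exfalso; simp only [rnk] at hlt; omega
  | insE e v w l =>
    obtain ⟨hv, hw, heVE⟩ := h1
    cases q with
    | delP y k' => exact ⟨h2, ⟨hv, hw, heVE⟩, rfl⟩
    | delE e' =>
      have hne : e ≠ e' := hnc
      obtain ⟨he', hpe'⟩ := h2
      have he'' : e' ∈ G.E := by
        have : e' ∈ insert e G.E := he'
        rcases Finset.mem_insert.mp this with rfl | h'
        · exact absurd rfl hne.symm
        · exact h'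
      refine ⟨⟨he'', fun k'' => hpe' k''⟩, ⟨hv, hw, ?_⟩, ?_⟩
      · show e ∉ G.V ∪ G.E.erase e'
        intro hmem
        rcases Finset.mem_union.mp hmem with h' | h'
        · exact heVE (Finset.mem_union_left _ h')
        · exact heVE (Finset.mem_union_right _ (Finset.mem_of_mem_erase h'))
      · refine PreGraph.ext' rfl ?_ ?_ ?_ ?_ rfl
        · show insert e (G.E.erase e') = (insert e G.E).erase e'
          ext a
          simp only [Finset.mem_insert, Finset.mem_erase]
          constructor
          · rintro (rfl | ⟨ha, hb⟩)
            · exact ⟨hne, Or.inl rfl⟩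
            · exact ⟨ha, Or.inr hb⟩
          · rintro ⟨ha, rfl | hb⟩
            · exact Or.inl rfl
            · exact Or.inr ⟨ha, hb⟩
        · funext x
          show (if x = e then some v else if x = e' then none else G.src x) =
            (if x = e' then none else if x = e then some v else G.src x)
          by_cases hxa : x = e <;> by_cases hxb : x = e' <;> simp_all
        · funext x
          show (if x = e then some w else if x = e' then none else G.tgt x) =
            (if x = e' then none else if x = e then some w else G.tgt x)
          by_cases hxa : x = e <;> by_cases hxb : x = e' <;> simp_all
        · funext x
          show (if x = e then some l else if x = e' then none else G.lab x) =
            (if x = e' then none else if x = e then some l else G.lab x)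
          by_cases hxa : x = e <;> by_cases hxb : x = e' <;> simp_all
    | delV v' =>
      obtain ⟨hv', hedge, hpv'⟩ := h2
      have hv'' : v' ∈ G.V := hv'
      have hvne : v ≠ v' := by
        intro hcon
        have := (hedge e (Finset.mem_insert_self e G.E)).1
        apply this
        show (if e = e then some v else G.src e) = some v'
        rw [if_pos rfl, hcon]
      have hwne : w ≠ v' := by
        intro hcon
        have := (hedge e (Finset.mem_insert_self e G.E)).2
        apply this
        show (if e = e then some w else G.tgt e) = some v'
        rw [if_pos rfl, hcon]
      have hene : e ≠ v' := by
        rintro rfl; exact heVE (Finset.mem_union_left _ hv'')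
      refine ⟨⟨hv'', fun f hf => ?_, fun k'' => hpv' k''⟩, ?_, ?_⟩
      · have hfe : f ≠ e := by rintro rfl; exact heVE (Finset.mem_union_right _ hf)
        have := hedge f (Finset.mem_insert_of_mem hf)
        constructor
        · intro hcon
          apply this.1
          show (if f = e then some v else G.src f) = some v'
          rw [if_neg hfe]; exact hcon
        · intro hcon
          apply this.2
          show (if f = e then some w else G.tgt f) = some v'
          rw [if_neg hfe]; exact hcon
      · refine ⟨Finset.mem_erase.mpr ⟨hvne, hv⟩, Finset.mem_erase.mpr ⟨hwne, hw⟩, ?_⟩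
        show e ∉ G.V.erase v' ∪ G.E
        intro hmem
        rcases Finset.mem_union.mp hmem with h' | h'
        · exact heVE (Finset.mem_union_left _ (Finset.mem_of_mem_erase h'))
        · exact heVE (Finset.mem_union_right _ h')
      · refine PreGraph.ext' rfl rfl rfl rfl ?_ rfl
        funext x
        show (if x = e then some l else if x = v' then none else G.lab x) =
          (if x = v' then none else if x = e then some l else G.lab x)
        by_cases hxa : x = e <;> by_cases hxb : x = v' <;> simp_all
    | updP y k' d' => exact ⟨h2, ⟨hv, hw, heVE⟩, rfl⟩
    | insV v' l' =>
      have hv'VE : v' ∉ G.V ∪ insert e G.E := h2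
      have hv'ne : v' ≠ e := by
        rintro rfl
        exact hv'VE (Finset.mem_union_right _ (Finset.mem_insert_self _ _))
      have hv'G : v' ∉ G.V ∪ G.E := by
        intro hmem
        rcases Finset.mem_union.mp hmem with h' | h'
        · exact hv'VE (Finset.mem_union_left _ h')
        · exact hv'VE (Finset.mem_union_right _ (Finset.mem_insert_of_mem h'))
      refine ⟨hv'G, ⟨Finset.mem_insert_of_mem hv, Finset.mem_insert_of_mem hw, ?_⟩, ?_⟩
      · show e ∉ insert v' G.V ∪ G.E
        intro hmem
        rcases Finset.mem_union.mp hmem with h' | h'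
        · rcases Finset.mem_insert.mp h' with rfl | h''
          · exact hv'ne rfl
          · exact heVE (Finset.mem_union_left _ h'')
        · exact heVE (Finset.mem_union_right _ h')
      · refine PreGraph.ext' rfl rfl rfl rfl ?_ rfl
        funext x
        show (if x = e then some l else if x = v' then some l' else G.lab x) =
          (if x = v' then some l' else if x = e then some l else G.lab x)
        by_cases hxa : x = e <;> by_cases hxb : x = v' <;> simp_all
    | _ => exfalso; simp only [rnk] at hlt; omega
  | insP x k d =>
    obtain ⟨hxVE, hnone⟩ := h1
    cases q with
    | delP y k' =>
      have hne : ¬(x = y ∧ k = k') := hnc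
      have hne' : ¬(y = x ∧ k' = k) := fun ⟨a, b⟩ => hne ⟨a.symm, b.symm⟩
      have h2' : (if y = x ∧ k' = k then some d else G.prop y k').isSome := h2
      rw [if_neg hne'] at h2'
      refine ⟨h2', ⟨hxVE, ?_⟩, ?_⟩
      · show (if x = y ∧ k = k' then none else G.prop x k) = none
        rw [if_neg hne]; exact hnone
      · refine PreGraph.ext' rfl rfl rfl rfl rfl ?_
        funext z k''
        show (if z = x ∧ k'' = k then some d else if z = y ∧ k'' = k' then none
            else G.prop z k'') =
          (if z = y ∧ k'' = k' then none else if z = x ∧ k'' = k then some d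
            else G.prop z k'')
        by_cases c2 : z = y ∧ k'' = k'
        · have c1 : ¬(z = x ∧ k'' = k) :=
            fun c1 => hne ⟨c1.1.symm.trans c2.1, c1.2.symm.trans c2.2⟩
          rw [if_neg c1, if_pos c2, if_pos c2]
        · rw [if_neg c2, if_neg c2]
    | delE e =>
      obtain ⟨heE, hpe⟩ := h2
      have heE' : e ∈ G.E := heE
      have hxe : x ≠ e := by
        rintro rfl
        have hp : (if x = x ∧ k = k then some d else G.prop x k) = none := hpe k
        rw [if_pos ⟨rfl, rfl⟩] at hp
        exact absurd hp (by simp)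
      refine ⟨⟨heE', fun k'' => ?_⟩, ⟨?_, hnone⟩, rfl⟩
      · have hp : (if e = x ∧ k'' = k then some d else G.prop e k'') = none := hpe k''
        split_ifs at hp with hc
        exact hp
      · show x ∈ G.V ∪ G.E.erase e
        rcases Finset.mem_union.mp hxVE with h' | h'
        · exact Finset.mem_union_left _ h'
        · exact Finset.mem_union_right _ (Finset.mem_erase.mpr ⟨hxe, h'⟩)
    | delV v =>
      obtain ⟨hvV, hedge, hpv⟩ := h2
      have hvV' : v ∈ G.V := hvV
      have hxv : x ≠ v := by
        rintro rfl
        have hp : (if x = x ∧ k = k then some d else G.prop x k) = none := hpv k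
        rw [if_pos ⟨rfl, rfl⟩] at hp
        exact absurd hp (by simp)
      refine ⟨⟨hvV', fun f hf => hedge f hf, fun k'' => ?_⟩, ⟨?_, hnone⟩, rfl⟩
      · have hp : (if v = x ∧ k'' = k then some d else G.prop v k'') = none := hpv k''
        split_ifs at hp with hc
        exact hp
      · show x ∈ G.V.erase v ∪ G.E
        rcases Finset.mem_union.mp hxVE with h' | h'
        · exact Finset.mem_union_left _ (Finset.mem_erase.mpr ⟨hxv, h'⟩)
        · exact Finset.mem_union_right _ h'
    | updP y k' d' =>
      have hne : ¬(x = y ∧ k = k') := hnc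
      have hne' : ¬(y = x ∧ k' = k) := fun ⟨a, b⟩ => hne ⟨a.symm, b.symm⟩
      have h2' : (if y = x ∧ k' = k then some d else G.prop y k').isSome := h2
      rw [if_neg hne'] at h2'
      refine ⟨h2', ⟨hxVE, ?_⟩, ?_⟩
      · show (if x = y ∧ k = k' then some d' else G.prop x k) = none
        rw [if_neg hne]; exact hnone
      · refine PreGraph.ext' rfl rfl rfl rfl rfl ?_
        funext z k''
        show (if z = x ∧ k'' = k then some d else if z = y ∧ k'' = k' then some d'
            else G.prop z k'') =
          (if z = y ∧ k'' = k' then some d' else if z = x ∧ k'' = k then some d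
            else G.prop z k'')
        by_cases c2 : z = y ∧ k'' = k'
        · have c1 : ¬(z = x ∧ k'' = k) :=
            fun c1 => hne ⟨c1.1.symm.trans c2.1, c1.2.symm.trans c2.2⟩
          rw [if_neg c1, if_pos c2, if_pos c2]
        · rw [if_neg c2, if_neg c2]
    | insV v l =>
      have hvVE : v ∉ G.V ∪ G.E := h2
      refine ⟨hvVE, ⟨?_, hnone⟩, rfl⟩
      show x ∈ insert v G.V ∪ G.E
      rcases Finset.mem_union.mp hxVE with h' | h'
      · exact Finset.mem_union_left _ (Finset.mem_insert_of_mem h')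
      · exact Finset.mem_union_right _ h'
    | insE e v w l =>
      obtain ⟨hvV, hwV, heVE⟩ := h2
      refine ⟨⟨hvV, hwV, heVE⟩, ⟨?_, hnone⟩, rfl⟩
      show x ∈ G.V ∪ insert e G.E
      rcases Finset.mem_union.mp hxVE with h' | h'
      · exact Finset.mem_union_left _ h'
      · exact Finset.mem_union_right _ (Finset.mem_insert_of_mem h')
    | insP y k' d' => exfalso; simp only [rnk] at hlt; omega

theorem updP_delP_absorb (x : ι) (k : K) (d : D) (G : PreGraph ι L K D) :
    applyOp (.delP x k) (applyOp (.updP x k d) G) = applyOp (.delP x k) G := by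
  refine PreGraph.ext' rfl rfl rfl rfl rfl ?_
  funext z k''
  show (if z = x ∧ k'' = k then none else if z = x ∧ k'' = k then some d
      else G.prop z k'') = (if z = x ∧ k'' = k then none else G.prop z k'')
  by_cases hc : z = x ∧ k'' = k
  · rw [if_pos hc, if_pos hc]
  · rw [if_neg hc, if_neg hc, if_neg hc]

theorem insP_updP_absorb (x : ι) (k : K) (d d' : D) (G : PreGraph ι L K D) :
    applyOp (.updP x k d') (applyOp (.insP x k d) G) = applyOp (.insP x k d') G := by
  refine PreGraph.ext' rfl rfl rfl rfl rfl ?_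
  funext z k''
  show (if z = x ∧ k'' = k then some d' else if z = x ∧ k'' = k then some d
      else G.prop z k'') = (if z = x ∧ k'' = k then some d' else G.prop z k'')
  by_cases hc : z = x ∧ k'' = k
  · rw [if_pos hc, if_pos hc]
  · rw [if_neg hc, if_neg hc, if_neg hc]

theorem insV_delV_cancel {v : ι} {l : L} {G : PreGraph ι L K D}
    (hG : IsPGraph G) (h1 : v ∉ G.V ∪ G.E) :
    applyOp (.delV v) (applyOp (.insV v l) G) = G := by
  have hvV : v ∉ G.V := fun h => h1 (Finset.mem_union_left _ h)
  have hlab : G.lab v = none := by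
    rcases hx : G.lab v with _ | val
    · rfl
    · exact absurd ((hG.lab_dom v).mp (by simp [hx])) h1
  refine PreGraph.ext' ?_ rfl rfl rfl ?_ rfl
  · exact Finset.erase_insert hvV
  · funext x
    show (if x = v then none else if x = v then some l else G.lab x) = G.lab x
    by_cases hx : x = v
    · rw [if_pos hx, hx, hlab]
    · rw [if_neg hx, if_neg hx]

theorem insE_delE_cancel {e v w : ι} {l : L} {G : PreGraph ι L K D}
    (hG : IsPGraph G) (h1 : e ∉ G.V ∪ G.E) :
    applyOp (.delE e) (applyOp (.insE e v w l) G) = G := by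
  have heE : e ∉ G.E := fun h => h1 (Finset.mem_union_right _ h)
  have hsrc : G.src e = none := by
    rcases hx : G.src e with _ | val
    · rfl
    · exact absurd ((hG.src_dom e).mp (by simp [hx])) heE
  have htgt : G.tgt e = none := by
    rcases hx : G.tgt e with _ | val
    · rfl
    · exact absurd ((hG.tgt_dom e).mp (by simp [hx])) heE
  have hlab : G.lab e = none := by
    rcases hx : G.lab e with _ | val
    · rfl
    · exact absurd ((hG.lab_dom e).mp (by simp [hx])) h1
  refine PreGraph.ext' rfl ?_ ?_ ?_ ?_ rfl
  · exact Finset.erase_insert heE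
  · funext x
    show (if x = e then none else if x = e then some v else G.src x) = G.src x
    by_cases hx : x = e
    · rw [if_pos hx, hx, hsrc]
    · rw [if_neg hx, if_neg hx]
  · funext x
    show (if x = e then none else if x = e then some w else G.tgt x) = G.tgt x
    by_cases hx : x = e
    · rw [if_pos hx, hx, htgt]
    · rw [if_neg hx, if_neg hx]
  · funext x
    show (if x = e then none else if x = e then some l else G.lab x) = G.lab x
    by_cases hx : x = e
    · rw [if_pos hx, hx, hlab]
    · rw [if_neg hx, if_neg hx]

theorem insP_delP_cancel {x : ι} {k : K} {d : D} {G : PreGraph ι L K D}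
    (hnone : G.prop x k = none) :
    applyOp (.delP x k) (applyOp (.insP x k d) G) = G := by
  refine PreGraph.ext' rfl rfl rfl rfl rfl ?_
  funext z k''
  show (if z = x ∧ k'' = k then none else if z = x ∧ k'' = k then some d
      else G.prop z k'') = G.prop z k''
  by_cases hc : z = x ∧ k'' = k
  · rw [if_pos hc, hc.1, hc.2, hnone]
  · rw [if_neg hc, if_neg hc]

theorem push (ops : List (EditOp ι L K D)) :
    ∀ (op : EditOp ι L K D) (G : PreGraph ι L K D),
    IsPGraph G → Applicable op G → ValidScript (applyOp op G) ops → Srt ops →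
    ∃ ops' : List (EditOp ι L K D), Srt ops' ∧ ValidScript G ops' ∧
      applyScript ops' G = applyScript ops (applyOp op G) ∧
      ops'.length ≤ 1 + ops.length ∧
      (∀ o ∈ ops', rnk o = rnk op ∨ ∃ p ∈ ops, rnk o = rnk p) ∧
      Relation.ReflTransGen Rew ((op, true) :: ops.map (fun o => (o, false)))
        (ops'.map (fun o => (o, false))) := by
  induction ops with
  | nil =>
    intro op G hG hop hval hsrt
    refine ⟨[op], List.pairwise_singleton _ _, .cons hop (.nil _), rfl, by simp,
      fun o ho => Or.inl (by simpa using congrArg rnk (List.mem_singleton.mp ho)), ?_⟩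
    exact Relation.ReflTransGen.single (rew_head (RewStep.unmark op) [])
  | cons q rest ih =>
    intro op G hG hop hval hsrt
    have hq_le : ∀ b ∈ rest, rnk q ≤ rnk b := (List.pairwise_cons.mp hsrt).1
    have hsrt' : Srt rest := (List.pairwise_cons.mp hsrt).2
    by_cases hle : rnk op ≤ rnk q
    · -- unmark immediately
      refine ⟨op :: q :: rest, ?_, .cons hop hval, rfl, by simp, ?_, ?_⟩
      · refine List.pairwise_cons.mpr ⟨?_, hsrt⟩
        intro b hb
        rcases List.mem_cons.mp hb with rfl | hb
        · exact hle
        · exact hle.trans (hq_le b hb)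
      · intro o ho
        rcases List.mem_cons.mp ho with rfl | ho
        · exact Or.inl rfl
        · exact Or.inr ⟨o, ho, rfl⟩
      · exact Relation.ReflTransGen.single
          (rew_head (RewStep.unmark op) ((q :: rest).map (fun o => (o, false))))
    · push_neg at hle
      cases hval with
      | cons hq hrest =>
      by_cases hcl : clash op q
      · -- special interacting pairs
        cases op with
        | updP x k d =>
          cases q with
          | delP y k' =>
            obtain ⟨rfl, rfl⟩ := (show x = y ∧ k = k' from hcl)
            have heq := updP_delP_absorb x k d G
            have hrest2 : ValidScript (applyOp (.delP x k) G) rest := by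
              rw [← heq]; exact hrest
            refine ⟨.delP x k :: rest, hsrt, .cons hop hrest2, ?_, by simp, ?_, ?_⟩
            · show applyScript rest (applyOp (.delP x k) G) =
                applyScript rest (applyOp (.delP x k) (applyOp (.updP x k d) G))
              rw [heq]
            · exact fun o ho => Or.inr ⟨o, ho, rfl⟩
            · exact Relation.ReflTransGen.single
                (rew_head (RewStep.updP_delP_same x k d) _)
          | _ => exact hcl.elim
        | insV v l =>
          cases q with
          | delV v' =>
            obtain rfl := (show v = v' from hcl)
            have heq := insV_delV_cancel (l := l) hG hop
            have hrest2 : ValidScript G rest := by rw [← heq]; exact hrest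
            refine ⟨rest, hsrt', hrest2, ?_, by simp; omega, ?_, ?_⟩
            · show applyScript rest G =
                applyScript rest (applyOp (.delV v) (applyOp (.insV v l) G))
              rw [heq]
            · exact fun o ho => Or.inr ⟨o, List.mem_cons_of_mem _ ho, rfl⟩
            · exact Relation.ReflTransGen.single
                (rew_head (RewStep.insV_delV_same v l) _)
          | _ => exact hcl.elim
        | insE e v w l =>
          cases q with
          | delE e' =>
            obtain rfl := (show e = e' from hcl)
            have heq := insE_delE_cancel (v := v) (w := w) (l := l) hG hop.2.2
            have hrest2 : ValidScript G rest := by rw [← heq]; exact hrest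
            refine ⟨rest, hsrt', hrest2, ?_, by simp; omega, ?_, ?_⟩
            · show applyScript rest G =
                applyScript rest (applyOp (.delE e) (applyOp (.insE e v w l) G))
              rw [heq]
            · exact fun o ho => Or.inr ⟨o, List.mem_cons_of_mem _ ho, rfl⟩
            · exact Relation.ReflTransGen.single
                (rew_head (RewStep.insE_delE_same e v w l) _)
          | _ => exact hcl.elim
        | insP x k d =>
          cases q with
          | delP y k' =>
            obtain ⟨rfl, rfl⟩ := (show x = y ∧ k = k' from hcl)
            have heq := insP_delP_cancel (G := G) (d := d) hop.2
            have hrest2 : ValidScript G rest := by rw [← heq]; exact hrest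
            refine ⟨rest, hsrt', hrest2, ?_, by simp; omega, ?_, ?_⟩
            · show applyScript rest G =
                applyScript rest (applyOp (.delP x k) (applyOp (.insP x k d) G))
              rw [heq]
            · exact fun o ho => Or.inr ⟨o, List.mem_cons_of_mem _ ho, rfl⟩
            · exact Relation.ReflTransGen.single
                (rew_head (RewStep.insP_delP_same x k d) _)
          | updP y k' d' =>
            obtain ⟨rfl, rfl⟩ := (show x = y ∧ k = k' from hcl)
            have heq := insP_updP_absorb x k d d' G
            have hrest2 : ValidScript (applyOp (.insP x k d') G) rest := by
              rw [← heq]; exact hrest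
            have hop2 : Applicable (.insP x k d') G := hop
            obtain ⟨ops'', s'', v'', a'', l'', r'', rtg''⟩ :=
              ih (.insP x k d') G hG hop2 hrest2 hsrt'
            refine ⟨ops'', s'', v'', ?_, by simp at l'' ⊢; omega, ?_, ?_⟩
            · show applyScript ops'' G =
                applyScript rest (applyOp (.updP x k d') (applyOp (.insP x k d) G))
              rw [heq]; exact a''
            · intro o ho
              rcases r'' o ho with h' | ⟨p, hp, hp'⟩
              · exact Or.inl h'
              · exact Or.inr ⟨p, List.mem_cons_of_mem _ hp, hp'⟩
            · exact Relation.ReflTransGen.head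
                (rew_head (RewStep.insP_updP_same x k d d') _) rtg''
          | _ => exact hcl.elim
        | delP x k => exact hcl.elim
        | delE e => exact hcl.elim
        | delV v => exact hcl.elim
      · -- commuting pairs
        obtain ⟨hqG, hopq, heq⟩ := swap_ops hG hle hcl hop hq
        have hG2 : IsPGraph (applyOp q G) := isPGraph_applyOp hG hqG
        have hrest2 : ValidScript (applyOp op (applyOp q G)) rest := by
          rw [heq]; exact hrest
        obtain ⟨ops'', s'', v'', a'', l'', r'', rtg''⟩ :=
          ih op (applyOp q G) hG2 hopq hrest2 hsrt'
        refine ⟨q :: ops'', ?_, .cons hqG v'', ?_, by simp at l'' ⊢; omega, ?_, ?_⟩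
        · refine List.pairwise_cons.mpr ⟨?_, s''⟩
          intro b hb
          rcases r'' b hb with h' | ⟨p, hp, hp'⟩
          · rw [h']; exact hle.le
          · rw [hp']; exact hq_le p hp
        · show applyScript ops'' (applyOp q G) =
            applyScript rest (applyOp q (applyOp op G))
          rw [a'', heq]
        · intro o ho
          rcases List.mem_cons.mp ho with rfl | ho
          · exact Or.inr ⟨o, List.mem_cons_self, rfl⟩
          · rcases r'' o ho with h' | ⟨p, hp, hp'⟩
            · exact Or.inl h'
            · exact Or.inr ⟨p, List.mem_cons_of_mem _ hp, hp'⟩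
        · exact Relation.ReflTransGen.head
            (rew_head (rewstep_swap hle hcl) (rest.map (fun o => (o, false))))
            (rtg_cons q rtg'')

end Sem

end GEDAux

/-- prepending a single edit operation to a canonical script and
exhaustively rewriting yields a canonical script with the same overall effect
and length at most one greater; moreover every rewrite step strictly decreases
the length of the suffix beginning at the marked operation, so rewriting
terminates. -/
theorem prepend_and_canonicalize
    [DecidableEq ι] [DecidableEq K]
    (G1 G2 G3 : PreGraph ι L K D) (hG1 : IsPGraph G1)
    (op : EditOp ι L K D) (ops : List (EditOp ι L K D))
    (hop : Applicable op G1) (hopG : applyOp op G1 = G2)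
    (hcan : Canonical ops) (hvalid : ValidScript G2 ops)
    (happ : applyScript ops G2 = G3) :
    (∃ ops' : List (EditOp ι L K D), Canonical ops' ∧ ValidScript G1 ops' ∧
      applyScript ops' G1 = G3 ∧ ops'.length ≤ 1 + ops.length ∧
      Relation.ReflTransGen Rew
        ((op, true) :: ops.map (fun o => (o, false)))
        (ops'.map (fun o => (o, false)))) ∧
    (∀ m m' : List (MOp ι L K D), Rew m m' → starLen m' < starLen m) := by
  subst hopG
  subst happ
  constructor
  · obtain ⟨ops', s', v', a', l', -, rtg⟩ :=
      GEDAux.push ops op G1 hG1 hop hvalid (GEDAux.canonical_srt hcan)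
    exact ⟨ops', GEDAux.srt_canonical s', v', a', l', rtg⟩
  · exact fun m m' h => GEDAux.rew_starLen h
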